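/- Under the random choice of the shift parameter β, the event that the shifted cube I+β is bad is independent of the position of I+β; more precisely, the badness of I+β is measurable with respect to the coordinates (β_j)_{2^{-j} ≥ ℓ(I)}, while the position I+β is measurable with respect to (β_j)_{2^{-j} < ℓ(I)}, and these two families of coordinates are independent. -/

import Mathlib

open MeasureTheory Set ProbabilityTheory

noncomputable section

/-- The (shifted) dyadic cube of generation `j` (sidelength `2^(-j)`) at position `q`,
translated by the vector `v`. -/
def dyCube {n : ℕ} (j : ℤ) (q : Fin n → ℤ) (v : Fin n → ℝ) : Set (Fin n → ℝ) :=
  Set.univ.pi fun i => Set.Ico ((2:ℝ)^(-j) * q i + v i) ((2:ℝ)^(-j) * (q i + 1) + v i)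

/-- The translation vector `∑_{i : 2^{-i} < 2^{-j}} 2^{-i} β_i` determining the position of the
shift of a cube of generation `j` by the shift parameter `β`. -/
def shiftVec {n : ℕ} (j : ℤ) (β : ℤ → Fin n → Fin 2) : Fin n → ℝ :=
  fun i => ∑' k : ℤ, if j < k then (2:ℝ)^(-k) * ((β k i : ℕ) : ℝ) else 0

/-- Distance between two sets in `ℝ^n`. -/
def setDist {n : ℕ} (s t : Set (Fin n → ℝ)) : ℝ :=
  (⨅ x ∈ s, EMetric.infEdist x t).toReal

/-- The cube `I + β` of generation `j` at position `q` is "bad" with parameters `r, γ` in the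
shifted dyadic system `𝒟^β`: some dyadic ancestor `J = (I+β)^(k)`, `k ≥ r`, satisfies
`dist(I+β, Jᶜ) ≤ ℓ(I)^γ ℓ(J)^(1-γ)`. -/
def BadCube {n : ℕ} (r : ℕ) (γ : ℝ) (β : ℤ → Fin n → Fin 2) (j : ℤ) (q : Fin n → ℤ) : Prop :=
  ∃ k : ℕ, r ≤ k ∧ ∃ q' : Fin n → ℤ,
    dyCube j q (shiftVec j β) ⊆ dyCube (j - k) q' (shiftVec (j - k) β) ∧
    setDist (dyCube j q (shiftVec j β)) (dyCube (j - k) q' (shiftVec (j - k) β))ᶜ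
      ≤ ((2:ℝ)^(-j)) ^ γ * ((2:ℝ)^(-(j - (k:ℤ)))) ^ (1 - γ)

/-! ### Auxiliary lemmas -/

/-- Summability of the geometric-type series defining `shiftVec`. -/
lemma summable_aux (j : ℤ) (b : ℤ → ℝ) (hb0 : ∀ k, 0 ≤ b k) (hb1 : ∀ k, b k ≤ 1) :
    Summable (fun k : ℤ => if j < k then (2:ℝ)^(-k) * b k else 0) := by
  set f : ℤ → ℝ := fun k => if j < k then (2:ℝ)^(-k) * b k else 0 with hf
  have hemb : Function.Injective (fun m : ℕ => j + 1 + (m:ℤ)) := by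
    intro a b h
    simpa using h
  have hrange : ∀ k ∉ Set.range (fun m : ℕ => j + 1 + (m:ℤ)), f k = 0 := by
    intro k hk
    have hnk : ¬ j < k := by
      intro hlt
      exact hk ⟨(k - j - 1).toNat, show j + 1 + ((k - j - 1).toNat : ℤ) = k by omega⟩
    simp [hf, hnk]
  rw [← hemb.summable_iff hrange]
  refine Summable.of_nonneg_of_le (f := fun m : ℕ => (2:ℝ)^(-(j+1)) * (1/2:ℝ)^m)
    (fun m => ?_) (fun m => ?_)
    ((summable_geometric_of_lt_one (r := (1/2:ℝ)) (by norm_num) (by norm_num)).mul_left _)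
  · simp only [Function.comp, hf]
    rw [if_pos (by omega : j < j + 1 + (m:ℤ))]
    exact mul_nonneg (by positivity) (hb0 _)
  · simp only [Function.comp, hf]
    rw [if_pos (by omega : j < j + 1 + (m:ℤ))]
    have h2 : (2:ℝ)^(-(j+1+(m:ℤ))) = (2:ℝ)^(-(j+1)) * (1/2:ℝ)^m := by
      rw [neg_add, zpow_add₀ (by norm_num : (2:ℝ) ≠ 0)]
      congr 1
      rw [zpow_neg, zpow_natCast, one_div, inv_pow]
    calc (2:ℝ)^(-(j+1+(m:ℤ))) * b (j+1+(m:ℤ))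
        ≤ (2:ℝ)^(-(j+1+(m:ℤ))) * 1 := by
          exact mul_le_mul_of_nonneg_left (hb1 _) (by positivity)
      _ = (2:ℝ)^(-(j+1)) * (1/2:ℝ)^m := by rw [mul_one, h2]

lemma summable_shiftVec {n : ℕ} (j : ℤ) (β : ℤ → Fin n → Fin 2) (i : Fin n) :
    Summable (fun k : ℤ => if j < k then (2:ℝ)^(-k) * ((β k i : ℕ) : ℝ) else 0) := by
  refine summable_aux j _ (fun k => by positivity) (fun k => ?_)
  exact_mod_cast Nat.cast_le.mpr (Fin.is_le (β k i))

/-- Decomposition of `shiftVec (j - k)` into `shiftVec j` plus a finite sum. -/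
lemma shiftVec_split {n : ℕ} (j : ℤ) (k : ℕ) (β : ℤ → Fin n → Fin 2) (i : Fin n) :
    shiftVec (j - k) β i
      = shiftVec j β i + ∑ m ∈ Finset.Ioc (j - (k:ℤ)) j, (2:ℝ)^(-m) * ((β m i : ℕ) : ℝ) := by
  set t : ℤ → ℝ := fun m => (2:ℝ)^(-m) * ((β m i : ℕ) : ℝ) with ht
  have hG : Summable (fun m : ℤ => if j < m then t m else 0) := summable_shiftVec j β i
  have hH : Summable (fun m : ℤ => if m ∈ Finset.Ioc (j - (k:ℤ)) j then t m else 0) :=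
    summable_of_ne_finset_zero (s := Finset.Ioc (j - (k:ℤ)) j) (fun m hm => if_neg hm)
  have hpt : ∀ m : ℤ, (if j - (k:ℤ) < m then t m else 0)
      = (if j < m then t m else 0) + (if m ∈ Finset.Ioc (j - (k:ℤ)) j then t m else 0) := by
    intro m
    by_cases h1 : j < m
    · rw [if_pos (by omega), if_pos h1, if_neg (by simp [Finset.mem_Ioc]; omega), add_zero]
    · by_cases h2 : j - (k:ℤ) < m
      · rw [if_pos h2, if_neg h1, if_pos (Finset.mem_Ioc.mpr ⟨h2, by omega⟩), zero_add]
      · rw [if_neg h2, if_neg h1, if_neg (by simp [Finset.mem_Ioc]; omega), add_zero]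
  have : shiftVec (j - k) β i = ∑' m : ℤ, (if j - (k:ℤ) < m then t m else 0) := rfl
  rw [this, tsum_congr hpt, Summable.tsum_add hG hH,
    tsum_eq_sum (s := Finset.Ioc (j - (k:ℤ)) j) (fun m hm => if_neg hm)]
  congr 1
  exact Finset.sum_congr rfl fun m hm => if_pos hm

/-- If `β` and `β'` agree on `Ioc (j - k) j`, the shifts of generations `j - k` and `j`
differ by the same vector. -/
lemma shiftVec_shift {n : ℕ} (j : ℤ) (k : ℕ) (β β' : ℤ → Fin n → Fin 2)
    (h : ∀ m ∈ Finset.Ioc (j - (k:ℤ)) j, β m = β' m) (i : Fin n) :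
    shiftVec (j - k) β' i - shiftVec (j - k) β i = shiftVec j β' i - shiftVec j β i := by
  rw [shiftVec_split j k β' i, shiftVec_split j k β i,
    Finset.sum_congr rfl (fun m hm => by rw [h m hm] :
      ∀ m ∈ Finset.Ioc (j - (k:ℤ)) j,
        (2:ℝ)^(-m) * ((β m i : ℕ) : ℝ) = (2:ℝ)^(-m) * ((β' m i : ℕ) : ℝ))]
  ring

lemma dyCube_translate {n : ℕ} (j : ℤ) (q : Fin n → ℤ) (v c : Fin n → ℝ) :
    dyCube j q (fun i => v i + c i) = (fun x => x + c) '' dyCube j q v := by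
  ext x
  simp only [dyCube, Set.mem_image, Set.mem_pi, Set.mem_univ, true_implies, Set.mem_Ico]
  constructor
  · intro h
    refine ⟨x - c, fun i => ?_, by ext i; simp⟩
    simp only [Pi.sub_apply]
    constructor
    · linarith [(h i).1]
    · linarith [(h i).2]
  · rintro ⟨y, hy, rfl⟩ i
    simp only [Pi.add_apply]
    constructor
    · linarith [(hy i).1]
    · linarith [(hy i).2]

lemma isometry_addRight' {n : ℕ} (c : Fin n → ℝ) : Isometry (fun x : Fin n → ℝ => x + c) :=
  Isometry.of_dist_eq fun x y => by simp [dist_add_right]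

lemma setDist_translate {n : ℕ} (c : Fin n → ℝ) (s t : Set (Fin n → ℝ)) :
    setDist ((fun x => x + c) '' s) ((fun x => x + c) '' t) = setDist s t := by
  unfold setDist
  congr 1
  rw [iInf_image]
  exact iInf_congr fun y => iInf_congr fun _ =>
    EMetric.infEdist_image (isometry_addRight' c)

/-- Translation invariance: the badness condition for ancestor level `k` only depends on
`β` restricted to `Ioc (j - k) j`. -/
lemma cond_translate {n : ℕ} (j : ℤ) (k : ℕ) (q q' : Fin n → ℤ) (β β' : ℤ → Fin n → Fin 2)
    (h : ∀ m ∈ Finset.Ioc (j - (k:ℤ)) j, β m = β' m) (D : ℝ) :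
    (dyCube j q (shiftVec j β) ⊆ dyCube (j - k) q' (shiftVec (j - k) β) ∧
      setDist (dyCube j q (shiftVec j β)) (dyCube (j - k) q' (shiftVec (j - k) β))ᶜ ≤ D) ↔
    (dyCube j q (shiftVec j β') ⊆ dyCube (j - k) q' (shiftVec (j - k) β') ∧
      setDist (dyCube j q (shiftVec j β')) (dyCube (j - k) q' (shiftVec (j - k) β'))ᶜ ≤ D) := by
  set c : Fin n → ℝ := fun i => shiftVec j β' i - shiftVec j β i with hc
  have hbij : Function.Bijective (fun x : Fin n → ℝ => x + c) := (Equiv.addRight c).bijective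
  have h1 : shiftVec j β' = fun i => shiftVec j β i + c i := by
    funext i; simp [hc]
  have h2 : shiftVec (j - k) β' = fun i => shiftVec (j - k) β i + c i := by
    funext i
    have := shiftVec_shift j k β β' h i
    simp only [hc]
    linarith
  rw [h1, h2, dyCube_translate, dyCube_translate,
    Set.image_subset_image_iff hbij.injective, ← Set.image_compl_eq hbij, setDist_translate]

/-- Badness only depends on the coordinates `β_m`, `m ≤ j`. -/
lemma badCube_congr {n : ℕ} (r : ℕ) (γ : ℝ) (β β' : ℤ → Fin n → Fin 2) (j : ℤ) (q : Fin n → ℤ)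
    (h : ∀ m ≤ j, β m = β' m) : BadCube r γ β j q ↔ BadCube r γ β' j q := by
  unfold BadCube
  refine exists_congr fun k => and_congr_right fun _ => exists_congr fun q' => ?_
  exact cond_translate j k q q' β β' (fun m hm => h m (Finset.mem_Ioc.mp hm).2) _

/-- the badness of the shifted cube `I+β` is measurable with respect to the
coordinates `β_i` with `2^{-i} ≥ ℓ(I)` (i.e. `i ≤ j`), the position of `I+β` is measurable
with respect to the coordinates with `2^{-i} < ℓ(I)` (i.e. `i > j`), and under the i.i.d.
random choice of `β` these two families of coordinates are independent; in particular the
badness of `I+β` is independent of its position. -/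
theorem statement2
    (n : ℕ) (hn : 1 ≤ n) (γ : ℝ) (hγ : γ ∈ Set.Ioo (0:ℝ) 1) (r : ℕ) (hr : 1 ≤ r)
    {Ω : Type*} [mΩ : MeasurableSpace Ω] (P : Measure Ω) [IsProbabilityMeasure P]
    (B : ℤ → Ω → (Fin n → Fin 2))
    (hmeas : ∀ k, Measurable (B k))
    (hindep : iIndepFun B P)
    (hunif : ∀ k s, P {ω | B k ω = s} = 1 / 2 ^ n)
    (j : ℤ) (q : Fin n → ℤ) :
    MeasurableSet[MeasurableSpace.comap
        (fun ω (i : {i : ℤ // i ≤ j}) => B i ω) inferInstance]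
      {ω | BadCube r γ (fun i => B i ω) j q} ∧
    Measurable[MeasurableSpace.comap
        (fun ω (i : {i : ℤ // j < i}) => B i ω) inferInstance]
      (fun ω => shiftVec j (fun i => B i ω)) ∧
    Indep
      (MeasurableSpace.comap (fun ω (i : {i : ℤ // i ≤ j}) => B i ω) inferInstance)
      (MeasurableSpace.comap (fun ω (i : {i : ℤ // j < i}) => B i ω) inferInstance)
      P := by
  refine ⟨?_, ?_, ?_⟩
  · -- Part 1: badness measurable w.r.t. coordinates `i ≤ j`
    set ext' : ({i : ℤ // i ≤ j} → Fin n → Fin 2) → ℤ → Fin n → Fin 2 :=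
      fun x m => if h : m ≤ j then x ⟨m, h⟩ else fun _ => 0 with hext'
    set S : Set ({i : ℤ // i ≤ j} → Fin n → Fin 2) := {x | BadCube r γ (ext' x) j q} with hSdef
    have hS : MeasurableSet S := by
      have hSU : S = ⋃ (k : ℕ), ⋃ (q' : Fin n → ℤ),
          {x | r ≤ k ∧
            (dyCube j q (shiftVec j (ext' x)) ⊆ dyCube (j - k) q' (shiftVec (j - k) (ext' x)) ∧
            setDist (dyCube j q (shiftVec j (ext' x)))
                (dyCube (j - k) q' (shiftVec (j - k) (ext' x)))ᶜ
              ≤ ((2:ℝ)^(-j)) ^ γ * ((2:ℝ)^(-(j - (k:ℤ)))) ^ (1 - γ))} := by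
        ext x
        simp only [hSdef, Set.mem_setOf_eq, BadCube, Set.mem_iUnion]
        exact ⟨fun ⟨k, hk, q', h⟩ => ⟨k, q', hk, h⟩, fun ⟨k, q', hk, h⟩ => ⟨k, hk, q', h⟩⟩
      rw [hSU]
      refine MeasurableSet.iUnion fun k => MeasurableSet.iUnion fun q' => ?_
      by_cases hrk : r ≤ k
      · simp only [hrk, true_and]
        -- cylinder argument: the condition depends only on coordinates in `Ioc (j-k) j`
        haveI : Finite (Set.Ioc (j - (k:ℤ)) j) := (Set.finite_Ioc _ _).to_subtype
        set R : ({i : ℤ // i ≤ j} → Fin n → Fin 2) →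
            ((Set.Ioc (j - (k:ℤ)) j) → Fin n → Fin 2) :=
          fun x m => x ⟨m.1, m.2.2⟩ with hR
        have hRmeas : Measurable R := measurable_pi_lambda _ fun m => measurable_pi_apply _
        set C : Set ({i : ℤ // i ≤ j} → Fin n → Fin 2) :=
          {x | dyCube j q (shiftVec j (ext' x)) ⊆ dyCube (j - k) q' (shiftVec (j - k) (ext' x)) ∧
            setDist (dyCube j q (shiftVec j (ext' x)))
                (dyCube (j - k) q' (shiftVec (j - k) (ext' x)))ᶜ
              ≤ ((2:ℝ)^(-j)) ^ γ * ((2:ℝ)^(-(j - (k:ℤ)))) ^ (1 - γ)} with hC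
        have hCC : C = R ⁻¹' (R '' C) := by
          refine Set.Subset.antisymm (Set.subset_preimage_image _ _) ?_
          intro x hx
          obtain ⟨x', hx', hRx⟩ := hx
          have hagree : ∀ m ∈ Finset.Ioc (j - (k:ℤ)) j, ext' x' m = ext' x m := by
            intro m hm
            obtain ⟨hm1, hm2⟩ := Finset.mem_Ioc.mp hm
            have hmem : m ∈ Set.Ioc (j - (k:ℤ)) j := Set.mem_Ioc.mpr ⟨hm1, hm2⟩
            have := congrFun hRx (⟨m, hmem⟩ : Set.Ioc (j - (k:ℤ)) j)
            simp only [hR] at this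
            simp only [hext', dif_pos hm2]
            exact this
          exact (cond_translate j k q q' (ext' x') (ext' x) hagree _).mp hx'
        rw [hCC]
        exact hRmeas (Set.Countable.measurableSet (Set.to_countable _))
      · simp only [hrk, false_and, Set.setOf_false]
        exact MeasurableSet.empty
    refine ⟨S, hS, ?_⟩
    ext ω
    simp only [Set.mem_preimage, hSdef, Set.mem_setOf_eq]
    refine badCube_congr r γ _ _ j q fun m hm => ?_
    simp only [hext', dif_pos hm]
  · -- Part 2: position measurable w.r.t. coordinates `i > j`
    set g : ({i : ℤ // j < i} → Fin n → Fin 2) → Fin n → ℝ :=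
      fun y i => ∑' k : ℤ, if h : j < k then (2:ℝ)^(-k) * ((y ⟨k, h⟩ i : ℕ) : ℝ) else 0
      with hgdef
    have hg : Measurable g := by
      refine measurable_pi_lambda _ fun i => ?_
      have hnn : ∀ (y : {i : ℤ // j < i} → Fin n → Fin 2) (k : ℤ),
          0 ≤ (if h : j < k then (2:ℝ)^(-k) * ((y ⟨k, h⟩ i : ℕ) : ℝ) else 0) := by
        intro y k
        by_cases h : j < k
        · simp only [dif_pos h]; positivity
        · simp [h]
      have hsum : ∀ y : {i : ℤ // j < i} → Fin n → Fin 2,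
          Summable (fun k : ℤ => if h : j < k then (2:ℝ)^(-k) * ((y ⟨k, h⟩ i : ℕ) : ℝ) else 0) := by
        intro y
        have hb : ∀ k : ℤ,
            (if h : j < k then (2:ℝ)^(-k) * ((y ⟨k, h⟩ i : ℕ) : ℝ) else 0)
              = (if j < k then
                  (2:ℝ)^(-k) * (if h : j < k then ((y ⟨k, h⟩ i : ℕ) : ℝ) else 0) else 0) := by
          intro k
          by_cases h : j < k <;> simp [h]
        rw [funext hb]
        refine summable_aux j _ (fun k => ?_) (fun k => ?_)
        · by_cases h : j < k
          · simp only [dif_pos h]; positivity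
          · simp [h]
        · by_cases h : j < k
          · simp only [dif_pos h]
            exact_mod_cast Nat.cast_le.mpr (Fin.is_le _)
          · simp [h]
      have heq : (fun y : {i : ℤ // j < i} → Fin n → Fin 2 =>
            ∑' k : ℤ, if h : j < k then (2:ℝ)^(-k) * ((y ⟨k, h⟩ i : ℕ) : ℝ) else 0)
          = fun y => (∑' k : ℤ,
              ENNReal.ofReal
                (if h : j < k then (2:ℝ)^(-k) * ((y ⟨k, h⟩ i : ℕ) : ℝ) else 0)).toReal := by
        funext y
        rw [← ENNReal.ofReal_tsum_of_nonneg (hnn y) (hsum y),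
          ENNReal.toReal_ofReal (tsum_nonneg (hnn y))]
      rw [heq]
      refine Measurable.ennreal_toReal (Measurable.ennreal_tsum fun k => ?_)
      refine ENNReal.measurable_ofReal.comp ?_
      by_cases h : j < k
      · simp only [dif_pos h]
        exact ((measurable_of_countable (fun a : Fin 2 => ((a : ℕ) : ℝ))).comp
          ((measurable_pi_apply i).comp (measurable_pi_apply (⟨k, h⟩ : {i : ℤ // j < i})))).const_mul _
      · simp only [dif_neg h]
        exact measurable_const
    have hfactor : (fun ω => shiftVec j (fun i => B i ω))
        = fun ω => g (fun i : {i : ℤ // j < i} => B i ω) := by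
      funext ω
      funext i
      exact tsum_congr fun k => by by_cases h : j < k <;> simp [shiftVec, hgdef, h]
    rw [hfactor]
    intro s hs
    exact ⟨g ⁻¹' s, hg hs, rfl⟩
  · -- Part 3: independence
    have hcomap : ∀ p : ℤ → Prop,
        MeasurableSpace.comap (fun ω (i : {i : ℤ // p i}) => B i ω)
            (inferInstance : MeasurableSpace ({i : ℤ // p i} → Fin n → Fin 2))
          = ⨆ i : {i : ℤ // p i}, MeasurableSpace.comap (B i.1) inferInstance := by
      intro p
      have hpi : (inferInstance : MeasurableSpace ({i : ℤ // p i} → Fin n → Fin 2))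
          = ⨆ a : {i : ℤ // p i},
              MeasurableSpace.comap (fun g : {i : ℤ // p i} → Fin n → Fin 2 => g a)
                inferInstance := rfl
      rw [hpi, MeasurableSpace.comap_iSup]
      exact iSup_congr fun a => MeasurableSpace.comap_comp
    have hdisj : Disjoint {i : ℤ | i ≤ j} {i : ℤ | j < i} := by
      rw [Set.disjoint_left]
      intro i hi hij
      simp only [Set.mem_setOf_eq] at hi hij
      omega
    have h3 := indep_iSup_of_disjoint
      (m := fun i : ℤ => MeasurableSpace.comap (B i) inferInstance)
      (fun i => (hmeas i).comap_le) hindep hdisj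
    have e1 : MeasurableSpace.comap (fun ω (i : {i : ℤ // i ≤ j}) => B i ω)
        (inferInstance : MeasurableSpace ({i : ℤ // i ≤ j} → Fin n → Fin 2))
        = ⨆ i ∈ {i : ℤ | i ≤ j}, MeasurableSpace.comap (B i) inferInstance := by
      rw [hcomap (fun i => i ≤ j)]
      exact (iSup_subtype' (p := fun i : ℤ => i ≤ j)
        (f := fun i _ => MeasurableSpace.comap (B i) inferInstance)).symm
    have e2 : MeasurableSpace.comap (fun ω (i : {i : ℤ // j < i}) => B i ω)
        (inferInstance : MeasurableSpace ({i : ℤ // j < i} → Fin n → Fin 2))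
        = ⨆ i ∈ {i : ℤ | j < i}, MeasurableSpace.comap (B i) inferInstance := by
      rw [hcomap (fun i => j < i)]
      exact (iSup_subtype' (p := fun i : ℤ => j < i)
        (f := fun i _ => MeasurableSpace.comap (B i) inferInstance)).symm
    rw [e1, e2]
    exact h3

end
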